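/- arXiv:0708.1542 — 2 statements merged into one kernel-verified Lean document; each statement's English description precedes it below -/
import Mathlib

section
/- For x ∈ ℝⁿ with x ≠ 0, the time integral of the expectation density is given in terms of a modified Bessel function: μ ∫_0^∞ ((λBt)^k / k!) e^{-λt} (4πDt)^{-n/2} exp(-|x|²/(4Dt)) dt = (μ/(λ k!)) (B/2)^k (2πD/λ)^{-n/2} z^ν K_ν(z), where z = |x|√(λ/D) and ν = k − n/2 + 1. -/
open Real MeasureTheory

/-- Modified Bessel function of the second kind, via its integral representation
`K_ν(z) = ∫_0^∞ e^{-z cosh t} cosh(ν t) dt`. -/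
noncomputable def besselK (nu z : ℝ) : ℝ :=
  ∫ t in Set.Ioi (0 : ℝ), Real.exp (-z * Real.cosh t) * Real.cosh (nu * t)

section Aux
open Set Filter


lemma aux_integrableOn (ν z : ℝ) (hz : 0 < z) :
    IntegrableOn (fun s : ℝ => Real.exp (ν * s - z * Real.cosh s)) (Set.Ioi (0:ℝ)) := by
  apply integrable_of_isBigO_exp_neg (a := 0) (b := 1) one_pos
  · exact Continuous.continuousOn (by fun_prop)
  · have h1 : Tendsto (fun s : ℝ => ((ν + 1) - z / 2 * (Real.exp s / s)) * s) atTop atBot := by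
      apply Filter.Tendsto.atBot_mul_atTop₀ _ tendsto_id
      have h0 := (Real.tendsto_exp_div_pow_atTop 1).const_mul_atTop
        (show (0:ℝ) < z / 2 by positivity)
      have hneg : Tendsto (fun s : ℝ => -(z / 2 * (Real.exp s / s ^ 1))) atTop atBot :=
        tendsto_neg_atTop_atBot.comp h0
      have := Filter.tendsto_atBot_add_const_left atTop (ν + 1) hneg
      simpa [sub_eq_add_neg] using this
    have h2 : Tendsto (fun s : ℝ => ν * s - z * Real.cosh s - (-1 * s)) atTop atBot := by
      apply tendsto_atBot_mono' _ _ h1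
      filter_upwards [eventually_ge_atTop (1:ℝ)] with s hs
      have hs0 : s ≠ 0 := by positivity
      have hc : Real.exp s / 2 ≤ Real.cosh s := by
        rw [Real.cosh_eq]
        have := (Real.exp_pos (-s)).le
        linarith
      have : z * (Real.exp s / 2) ≤ z * Real.cosh s :=
        mul_le_mul_of_nonneg_left hc hz.le
      have he : ((ν + 1) - z / 2 * (Real.exp s / s)) * s = (ν+1) * s - z / 2 * Real.exp s := by
        field_simp
      rw [he]
      nlinarith
    rw [show (fun s : ℝ => Real.exp (ν * s - z * Real.cosh s))
        = fun s : ℝ => Real.exp ((fun s => ν * s - z * Real.cosh s) s) from rfl,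
      show (fun s : ℝ => Real.exp (-1 * s)) = fun s : ℝ => Real.exp ((fun s => -1 * s) s) from rfl,
      Real.isBigO_exp_comp_exp_comp]
    exact h2.isBoundedUnder_le_atBot

lemma aux_integral_line (ν z : ℝ) (hz : 0 < z) :
    ∫ s : ℝ, Real.exp (ν * s - z * Real.cosh s) = 2 * besselK ν z := by
  have hI := aux_integrableOn ν z hz
  have hI' := aux_integrableOn (-ν) z hz
  have hIneg : IntegrableOn (fun s : ℝ => Real.exp (ν * -s - z * Real.cosh s))
      (Set.Ioi (0:ℝ)) := by
    apply hI'.congr_fun _ measurableSet_Ioi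
    intro s _
    simp [neg_mul, mul_neg]
  have hIic : IntegrableOn (fun s : ℝ => Real.exp (ν * s - z * Real.cosh s)) (Set.Iic 0) := by
    rw [← (Measure.measurePreserving_neg (volume : Measure ℝ)).integrableOn_comp_preimage
        (Homeomorph.neg ℝ).measurableEmbedding]
    simp only [Function.comp_def, neg_preimage, neg_Iic, neg_zero, Real.cosh_neg]
    exact (integrableOn_Ici_iff_integrableOn_Ioi).2 hIneg
  rw [← intervalIntegral.integral_Iic_add_Ioi hIic hI]
  have hrefl := integral_comp_neg_Ioi 0 (fun u : ℝ => Real.exp (ν * u - z * Real.cosh u))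
  simp only [Real.cosh_neg, neg_zero] at hrefl
  rw [← hrefl, ← integral_add hIneg hI]
  have hcong : ∀ s ∈ Set.Ioi (0:ℝ),
      Real.exp (ν * -s - z * Real.cosh s) + Real.exp (ν * s - z * Real.cosh s)
        = 2 * (Real.exp (-z * Real.cosh s) * Real.cosh (ν * s)) := by
    intro s _
    rw [show ν * -s - z * Real.cosh s = -(ν*s) + -(z * Real.cosh s) by ring,
      show ν * s - z * Real.cosh s = ν*s + -(z * Real.cosh s) by ring,
      Real.exp_add, Real.exp_add, show -z * Real.cosh s = -(z * Real.cosh s) by ring,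
      Real.cosh_eq (ν * s)]
    ring
  rw [setIntegral_congr_fun measurableSet_Ioi hcong, integral_const_mul]
  rfl

lemma aux_subst (ν a b : ℝ) (ha : 0 < a) (hb : 0 < b) :
    ∫ t in Set.Ioi (0:ℝ), t ^ (ν - 1) * Real.exp (-(a / t) - b * t)
      = 2 * Real.sqrt (a / b) ^ ν * besselK ν (2 * Real.sqrt (a * b)) := by
  set c := Real.sqrt (a / b) with hc_def
  have hc : 0 < c := Real.sqrt_pos.2 (div_pos ha hb)
  have hab : (0:ℝ) < Real.sqrt (a * b) := Real.sqrt_pos.2 (mul_pos ha hb)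
  -- key algebraic facts
  have h1 : a / c = Real.sqrt (a * b) := by
    rw [div_eq_iff hc.ne', hc_def, ← Real.sqrt_mul (mul_pos ha hb).le,
      show a * b * (a / b) = a ^ 2 by field_simp, Real.sqrt_sq ha.le]
  have h2 : b * c = Real.sqrt (a * b) := by
    have : b * c = Real.sqrt (b ^ 2 * (a / b)) := by
      rw [Real.sqrt_mul (sq_nonneg b), Real.sqrt_sq hb.le, hc_def]
    rw [this]
    congr 1
    field_simp
  -- image of ℝ under s ↦ c * exp s
  have himg : (fun s : ℝ => c * Real.exp s) '' Set.univ = Set.Ioi 0 := by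
    ext t
    constructor
    · rintro ⟨s, -, rfl⟩
      exact mul_pos hc (Real.exp_pos s)
    · intro ht
      refine ⟨Real.log (t / c), trivial, ?_⟩
      show c * Real.exp (Real.log (t / c)) = t
      rw [Real.exp_log (div_pos ht hc)]
      field_simp
  rw [← himg, integral_image_eq_integral_abs_deriv_smul MeasurableSet.univ
      (fun s _ => ((Real.hasDerivAt_exp s).const_mul c).hasDerivWithinAt)
      (fun p _ q _ h => Real.exp_injective (mul_left_cancel₀ hc.ne' h)),
    Measure.restrict_univ]
  have hpt : ∀ s : ℝ, |c * Real.exp s| • ((c * Real.exp s) ^ (ν - 1) *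
      Real.exp (-(a / (c * Real.exp s)) - b * (c * Real.exp s)))
      = c ^ ν * Real.exp (ν * s - 2 * Real.sqrt (a * b) * Real.cosh s) := by
    intro s
    have hu : 0 < c * Real.exp s := mul_pos hc (Real.exp_pos s)
    have hexp : -(a / (c * Real.exp s)) - b * (c * Real.exp s)
        = -(2 * Real.sqrt (a * b) * Real.cosh s) := by
      rw [show a / (c * Real.exp s) = a / c * (Real.exp s)⁻¹ by ring,
        h1, ← Real.exp_neg, show b * (c * Real.exp s) = b * c * Real.exp s by ring, h2,
        Real.cosh_eq]
      ring
    rw [hexp, smul_eq_mul, abs_of_pos hu, ← mul_assoc,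
      show c * Real.exp s * (c * Real.exp s) ^ (ν - 1)
        = (c * Real.exp s) ^ ν from by
          rw [Real.rpow_sub_one hu.ne']; field_simp,
      Real.mul_rpow hc.le (Real.exp_pos s).le,
      Real.rpow_def_of_pos (Real.exp_pos s), Real.log_exp, mul_assoc, ← Real.exp_add]
    ring_nf
  simp_rw [hpt]
  rw [MeasureTheory.integral_const_mul, aux_integral_line ν _ (by positivity)]
  ring

end Aux

section Main
open Set Filter

theorem time_integrated_density_bessel
    (mu lam D B : ℝ) (hmu : 0 < mu) (hlam : 0 < lam) (hD : 0 < D) (hB : 0 < B)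
    (n : ℕ) (hn : 1 ≤ n) (k : ℕ)
    (x : EuclideanSpace ℝ (Fin n)) (hx : x ≠ 0) :
    mu * ∫ t in Set.Ioi (0 : ℝ),
        (lam * B * t) ^ k / (Nat.factorial k) * Real.exp (-lam * t) *
          ((4 * π * D * t) ^ (-(n : ℝ) / 2) * Real.exp (-‖x‖ ^ 2 / (4 * D * t)))
      = mu / (lam * (Nat.factorial k)) * (B / 2) ^ k * (2 * π * D / lam) ^ (-(n : ℝ) / 2)
          * (‖x‖ * Real.sqrt (lam / D)) ^ ((k : ℝ) - (n : ℝ) / 2 + 1)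
          * besselK ((k : ℝ) - (n : ℝ) / 2 + 1) (‖x‖ * Real.sqrt (lam / D)) := by
  have hr : (0:ℝ) < ‖x‖ := norm_pos_iff.mpr hx
  have hπ : (0:ℝ) < π := Real.pi_pos
  set ν : ℝ := (k : ℝ) - (n : ℝ) / 2 + 1 with hν_def
  set a : ℝ := ‖x‖ ^ 2 / (4 * D) with ha_def
  have ha : 0 < a := by positivity
  set z : ℝ := ‖x‖ * Real.sqrt (lam / D) with hz_def
  have hzpos : 0 < z := by
    have : 0 < Real.sqrt (lam / D) := Real.sqrt_pos.2 (by positivity)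
    positivity
  have hstep : ∀ t ∈ Set.Ioi (0:ℝ),
      (lam * B * t) ^ k / (Nat.factorial k) * Real.exp (-lam * t) *
          ((4 * π * D * t) ^ (-(n : ℝ) / 2) * Real.exp (-‖x‖ ^ 2 / (4 * D * t)))
        = ((lam * B) ^ k / (Nat.factorial k) * (4 * π * D) ^ (-(n : ℝ) / 2)) *
            (t ^ (ν - 1) * Real.exp (-(a / t) - lam * t)) := by
    intro t ht
    rw [Set.mem_Ioi] at ht
    have e1 : (lam * B * t) ^ k = (lam * B) ^ k * t ^ k := mul_pow _ _ _
    have e2 : (4 * π * D * t) ^ (-(n : ℝ) / 2)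
        = (4 * π * D) ^ (-(n : ℝ) / 2) * t ^ (-(n : ℝ) / 2) :=
      Real.mul_rpow (by positivity) ht.le
    have e3 : (t : ℝ) ^ (ν - 1) = t ^ k * t ^ (-(n : ℝ) / 2) := by
      rw [← Real.rpow_natCast t k, ← Real.rpow_add ht]
      congr 1
      rw [hν_def]; ring
    have e4 : Real.exp (-(a / t) - lam * t)
        = Real.exp (-lam * t) * Real.exp (-‖x‖ ^ 2 / (4 * D * t)) := by
      rw [← Real.exp_add]
      congr 1
      rw [ha_def]
      field_simp
      ring
    rw [e1, e2, e3, e4]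
    ring
  rw [setIntegral_congr_fun measurableSet_Ioi hstep, MeasureTheory.integral_const_mul,
    aux_subst ν a lam ha hlam]
  have hz1 : 2 * Real.sqrt (a * lam) = z := by
    rw [show a * lam = (z / 2) ^ 2 by
      rw [hz_def, ha_def, div_pow, mul_pow, Real.sq_sqrt (by positivity : (0:ℝ) ≤ lam / D)]
      field_simp; ring,
      Real.sqrt_sq (by positivity)]
    ring
  have hz2 : Real.sqrt (a / lam) = z / (2 * lam) := by
    rw [show a / lam = (z / (2 * lam)) ^ 2 by
      rw [hz_def, ha_def, div_pow, mul_pow, Real.sq_sqrt (by positivity : (0:ℝ) ≤ lam / D)]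
      field_simp; ring,
      Real.sqrt_sq (by positivity)]
  rw [hz1, hz2]
  have h2lam : (0:ℝ) < 2 * lam := by positivity
  have e5 : (z / (2 * lam)) ^ ν = z ^ ν / (2 * lam) ^ ν :=
    Real.div_rpow hzpos.le h2lam.le ν
  have e6 : (2 * lam) ^ ν = (2 * lam) ^ (k:ℕ) * (2 * lam) ^ (-(n : ℝ) / 2) * (2 * lam) := by
    rw [hν_def, show (k : ℝ) - (n : ℝ) / 2 + 1 = (k:ℝ) + (-(n:ℝ)/2) + 1 by ring,
      Real.rpow_add h2lam, Real.rpow_add h2lam, Real.rpow_natCast, Real.rpow_one]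
  have h2lw : (0:ℝ) < (2 * lam) ^ (-(n : ℝ) / 2) := Real.rpow_pos_of_pos h2lam _
  have e7 : (4 * π * D) ^ (-(n : ℝ) / 2)
      = (2 * π * D / lam) ^ (-(n : ℝ) / 2) * (2 * lam) ^ (-(n : ℝ) / 2) := by
    rw [← Real.mul_rpow (by positivity) h2lam.le]
    congr 1
    field_simp
    ring
  have hfact : ((Nat.factorial k : ℝ)) ≠ 0 := by positivity
  rw [e5, e6, e7]
  rw [mul_pow lam B, mul_pow 2 lam, div_pow B 2]
  field_simp

end Main
end

section
/- For a, b > 0 and real ν, ∫_0^∞ t^{ν−1} exp(−a/t − b t) dt = 2 (a/b)^{ν/2} K_ν(2√(ab)), where K_ν is the modified Bessel function of the second kind. -/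
open Real MeasureTheory

open Set Filter in
lemma integrableOn_exp_cosh_Ioi (z nu : ℝ) (hz : 0 < z) :
    IntegrableOn (fun u : ℝ => Real.exp (nu * u - z * Real.cosh u)) (Set.Ioi 0) := by
  apply integrable_of_isBigO_exp_neg (a := 0) (b := 1) one_pos
  · exact (Real.continuous_exp.comp (by continuity)).continuousOn
  · rw [Asymptotics.isBigO_iff]
    refine ⟨1, ?_⟩
    have h1 : (fun u : ℝ => (nu + 1) * u) =o[atTop] Real.exp := by
      simpa using (Real.isLittleO_pow_exp_atTop (n := 1)).const_mul_left (nu + 1)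
    filter_upwards [h1.def (half_pos hz), eventually_ge_atTop (0 : ℝ)] with u hu hu0
    have hcosh : Real.exp u / 2 ≤ Real.cosh u := by
      rw [Real.cosh_eq]
      have := (Real.exp_pos (-u)).le
      linarith
    have h2 : (nu + 1) * u ≤ z / 2 * Real.exp u := by
      calc (nu + 1) * u ≤ |(nu + 1) * u| := le_abs_self _
      _ = ‖(nu + 1) * u‖ := rfl
      _ ≤ z / 2 * ‖Real.exp u‖ := hu
      _ = z / 2 * Real.exp u := by rw [Real.norm_eq_abs, abs_of_pos (Real.exp_pos u)]
    have h3 : z / 2 * Real.exp u ≤ z * Real.cosh u := by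
      have := mul_le_mul_of_nonneg_left hcosh hz.le
      calc z / 2 * Real.exp u = z * (Real.exp u / 2) := by ring
      _ ≤ z * Real.cosh u := this
    have : nu * u - z * Real.cosh u ≤ -u := by nlinarith
    simp only [Real.norm_eq_abs, Real.abs_exp, one_mul, neg_one_mul]
    exact Real.exp_le_exp.mpr this

open Set Filter in
lemma integrable_exp_cosh (z nu : ℝ) (hz : 0 < z) :
    Integrable (fun u : ℝ => Real.exp (nu * u - z * Real.cosh u)) := by
  rw [← integrableOn_univ, ← Set.Iic_union_Ioi (a := (0 : ℝ)), integrableOn_union]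
  refine ⟨?_, integrableOn_exp_cosh_Ioi z nu hz⟩
  have A : MeasurableEmbedding fun x : ℝ => -x :=
    (Homeomorph.neg ℝ).isClosedEmbedding.measurableEmbedding
  have key : IntegrableOn (fun u : ℝ => Real.exp (-nu * u - z * Real.cosh u)) (Set.Ici 0) := by
    rw [integrableOn_Ici_iff_integrableOn_Ioi]
    exact integrableOn_exp_cosh_Ioi z (-nu) hz
  have : IntegrableOn ((fun u : ℝ => Real.exp (-nu * u - z * Real.cosh u)) ∘ fun x : ℝ => -x)
      ((fun x : ℝ => -x) ⁻¹' Set.Ici 0) := by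
    rw [← A.integrableOn_map_iff, Measure.map_neg_eq_self (volume : Measure ℝ)]
    exact key
  have hpre : (fun x : ℝ => -x) ⁻¹' Set.Ici 0 = Set.Iic 0 := by
    ext x; simp
  rw [hpre] at this
  refine this.congr_fun (fun x _ => ?_) measurableSet_Iic
  simp only [Function.comp_apply, Real.cosh_neg]
  congr 1
  ring

open Set in
lemma integral_exp_cosh_eq (z nu : ℝ) (hz : 0 < z) :
    ∫ u : ℝ, Real.exp (nu * u - z * Real.cosh u) = 2 * besselK nu z := by
  have hint := integrable_exp_cosh z nu hz
  have hint' := integrable_exp_cosh z (-nu) hz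
  rw [← setIntegral_univ, ← Set.Iic_union_Ioi (a := (0 : ℝ)),
    setIntegral_union (Set.Iic_disjoint_Ioi le_rfl) measurableSet_Ioi
      hint.integrableOn hint.integrableOn]
  have h1 : ∫ u in Iic (0 : ℝ), Real.exp (nu * u - z * Real.cosh u)
      = ∫ u in Ioi (0 : ℝ), Real.exp (-nu * u - z * Real.cosh u) := by
    rw [show Ioi (0 : ℝ) = Ioi (-(0 : ℝ)) by norm_num,
      ← integral_comp_neg_Iic (0 : ℝ) (fun u => Real.exp (-nu * u - z * Real.cosh u))]
    refine setIntegral_congr_fun measurableSet_Iic (fun x _ => ?_)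
    simp only [Real.cosh_neg]
    congr 1
    ring
  rw [h1, ← integral_add (hint'.integrableOn) (hint.integrableOn)]
  rw [besselK, ← integral_const_mul]
  refine setIntegral_congr_fun measurableSet_Ioi (fun x _ => ?_)
  rw [Real.cosh_eq (nu * x), sub_eq_add_neg (-nu * x), sub_eq_add_neg (nu * x),
    Real.exp_add, Real.exp_add]
  ring_nf

theorem integral_rpow_exp_eq_besselK
    (a b nu : ℝ) (ha : 0 < a) (hb : 0 < b) :
    ∫ t in Set.Ioi (0 : ℝ), t ^ (nu - 1) * Real.exp (-a / t - b * t)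
      = 2 * (a / b) ^ (nu / 2) * besselK nu (2 * Real.sqrt (a * b)) := by
  set c : ℝ := Real.sqrt (a / b) with hc_def
  set z : ℝ := 2 * Real.sqrt (a * b) with hz_def
  have hab : 0 < a / b := div_pos ha hb
  have hc : 0 < c := Real.sqrt_pos.mpr hab
  have hsab : 0 < Real.sqrt (a * b) := Real.sqrt_pos.mpr (mul_pos ha hb)
  have hz : 0 < z := by positivity
  -- key algebraic identities
  have hac : a = c * Real.sqrt (a * b) := by
    rw [hc_def, ← Real.sqrt_mul hab.le,
      show a / b * (a * b) = a ^ 2 by field_simp, Real.sqrt_sq ha.le]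
  have hbc : b * c = Real.sqrt (a * b) := by
    rw [hc_def, ← Real.sqrt_sq hb.le, ← Real.sqrt_mul (by positivity : (0:ℝ) ≤ b ^ 2)]
    congr 1
    field_simp
    rw [Real.sq_sqrt (sq_nonneg b)]
  -- change of variables t = c * exp u
  have himg : (fun u : ℝ => c * Real.exp u) '' Set.univ = Set.Ioi 0 := by
    ext y
    simp only [Set.image_univ, Set.mem_range, Set.mem_Ioi]
    constructor
    · rintro ⟨u, rfl⟩; positivity
    · intro hy
      exact ⟨Real.log (y / c), by rw [Real.exp_log (div_pos hy hc), mul_div_cancel₀ _ hc.ne']⟩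
  have hder : ∀ x ∈ (Set.univ : Set ℝ),
      HasDerivWithinAt (fun u : ℝ => c * Real.exp u) (c * Real.exp x) Set.univ x :=
    fun x _ => ((Real.hasDerivAt_exp x).const_mul c).hasDerivWithinAt
  have hinj : Set.InjOn (fun u : ℝ => c * Real.exp u) Set.univ := by
    intro x _ y _ h
    simpa using Real.exp_injective (mul_left_cancel₀ hc.ne' h)
  have key := integral_image_eq_integral_abs_deriv_smul MeasurableSet.univ hder hinj
    (fun t => t ^ (nu - 1) * Real.exp (-a / t - b * t))
  rw [himg, setIntegral_univ] at key
  rw [key]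
  have hptw : ∀ u : ℝ, |c * Real.exp u| •
      ((c * Real.exp u) ^ (nu - 1) * Real.exp (-a / (c * Real.exp u) - b * (c * Real.exp u)))
      = c ^ nu * Real.exp (nu * u - z * Real.cosh u) := by
    intro u
    have hcu : 0 < c * Real.exp u := by positivity
    rw [smul_eq_mul, abs_of_pos hcu]
    have h1 : (c * Real.exp u) ^ (nu - 1)
        = c ^ (nu - 1) * Real.exp ((nu - 1) * u) := by
      rw [Real.mul_rpow hc.le (Real.exp_pos u).le,
        Real.rpow_def_of_pos (Real.exp_pos u), Real.log_exp, mul_comm u (nu - 1)]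
    have e1 : a / (c * Real.exp u) = Real.sqrt (a * b) * Real.exp (-u) := by
      conv_lhs => rw [hac]
      rw [Real.exp_neg]
      field_simp
    have e2 : b * (c * Real.exp u) = Real.sqrt (a * b) * Real.exp u := by
      rw [← mul_assoc, hbc]
    have h2 : -a / (c * Real.exp u) - b * (c * Real.exp u) = -(z * Real.cosh u) := by
      rw [neg_div, neg_sub_left, e1, e2, Real.cosh_eq, hz_def]
      ring
    rw [h1, h2]
    have h3 : c * c ^ (nu - 1) = c ^ nu := by
      rw [show nu = 1 + (nu - 1) by ring, Real.rpow_add hc, Real.rpow_one]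
      ring_nf
    have h4 : c * Real.exp u * (c ^ (nu - 1) * Real.exp ((nu - 1) * u)
          * Real.exp (-(z * Real.cosh u)))
        = c * c ^ (nu - 1) * (Real.exp u * Real.exp ((nu - 1) * u)
          * Real.exp (-(z * Real.cosh u))) := by ring
    rw [h4, h3, ← Real.exp_add, ← Real.exp_add]
    congr 1
    ring
  simp_rw [hptw]
  rw [integral_const_mul, integral_exp_cosh_eq z nu hz]
  have hcnu : c ^ nu = (a / b) ^ (nu / 2) := by
    rw [hc_def, Real.sqrt_eq_rpow, ← Real.rpow_mul hab.le,
      show 1 / 2 * nu = nu / 2 by ring]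
  rw [hcnu]
  ring
end
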